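/- arXiv:2012.00681 — 2 statements merged into one kernel-verified Lean document; each statement's English description precedes it below -/
import Mathlib

section
/- Length contraction (general form): let p, q be timelike vectors and let w ∈ p^⊥ be a nonzero spacelike vector with ⟨p,q⟩ ≠ 0. Define w' := w - (⟨w,q⟩/⟨p,q⟩)p. Then w' ∈ q^⊥ and ⟨w',w'⟩ = ⟨w,w⟩·(1 + ta(q,w)/ta(p,q)). -/
noncomputable def mdot {n : ℕ} (p q : Fin (n + 1) → ℝ) : ℝ :=
  (∑ i, p i * q i) - 2 * (p 0 * q 0)

noncomputable def tance {n : ℕ} (p q : Fin (n + 1) → ℝ) : ℝ :=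
  (mdot p q) ^ 2 / (mdot p p * mdot q q)

lemma mdot_eq {n : ℕ} (p q : Fin (n + 1) → ℝ) :
    mdot p q = (∑ i : Fin n, p i.succ * q i.succ) - p 0 * q 0 := by
  simp [mdot, Fin.sum_univ_succ]; ring

lemma mdot_comm {n : ℕ} (p q : Fin (n + 1) → ℝ) : mdot p q = mdot q p := by
  simp [mdot, mul_comm]

lemma mdot_sub_smul_left {n : ℕ} (w p q : Fin (n + 1) → ℝ) (c : ℝ) :
    mdot (w - c • p) q = mdot w q - c * mdot p q := by
  simp [mdot, Pi.sub_apply, Pi.smul_apply, smul_eq_mul, sub_mul,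
    Finset.sum_sub_distrib, Finset.mul_sum, mul_sub, mul_assoc]
  ring

lemma mdot_spacelike {n : ℕ} (p w : Fin (n + 1) → ℝ)
    (hp : mdot p p < 0) (hw : w ≠ 0) (hwp : mdot w p = 0) : 0 < mdot w w := by
  rw [mdot_eq] at hp hwp ⊢
  have hP : (∑ i : Fin n, p i.succ * p i.succ) < p 0 * p 0 := by linarith
  have hPnn : 0 ≤ ∑ i : Fin n, p i.succ * p i.succ :=
    Finset.sum_nonneg fun i _ => mul_self_nonneg _
  have hp0 : p 0 ≠ 0 := by
    intro h; rw [h] at hP; nlinarith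
  have hCS := Finset.sum_mul_sq_le_sq_mul_sq Finset.univ
      (fun i : Fin n => w i.succ) (fun i : Fin n => p i.succ)
  have hWnn : 0 ≤ ∑ i : Fin n, w i.succ * w i.succ :=
    Finset.sum_nonneg fun i _ => mul_self_nonneg _
  have hWpos : 0 < ∑ i : Fin n, w i.succ * w i.succ := by
    rcases hWnn.lt_or_eq with h | h
    · exact h
    · exfalso
      have hWz : ∀ i : Fin n, w i.succ = 0 := by
        intro i
        have := Finset.sum_eq_zero_iff_of_nonneg
          (fun i _ => mul_self_nonneg (w i.succ)) |>.mp h.symm i (Finset.mem_univ i)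
        nlinarith [this]
      have hw0 : w 0 = 0 := by
        have : (∑ i : Fin n, w i.succ * p i.succ) = 0 :=
          Finset.sum_eq_zero fun i _ => by rw [hWz i]; ring
        rw [this] at hwp
        have := mul_eq_zero.mp (by linarith : w 0 * p 0 = 0)
        tauto
      apply hw
      funext i
      refine Fin.cases hw0 (fun j => hWz j) i
  have key : (w 0 * p 0) ^ 2 ≤ (∑ i : Fin n, w i.succ * w i.succ) *
      (∑ i : Fin n, p i.succ * p i.succ) := by
    have : (∑ i : Fin n, w i.succ * p i.succ) = w 0 * p 0 := by linarith
    calc (w 0 * p 0)^2 = (∑ i : Fin n, w i.succ * p i.succ)^2 := by rw [this]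
    _ ≤ _ := by simpa only [pow_two] using hCS
  have h1 : (∑ i : Fin n, w i.succ * w i.succ) * (∑ i : Fin n, p i.succ * p i.succ)
      < (∑ i : Fin n, w i.succ * w i.succ) * (p 0 * p 0) :=
    mul_lt_mul_of_pos_left hP hWpos
  nlinarith [key, h1, mul_self_pos.mpr hp0]


/-- length contraction, general form. -/
theorem length_contraction {n : ℕ} (p q w : Fin (n + 1) → ℝ)
    (hp : mdot p p < 0) (hq : mdot q q < 0)
    (hw : w ≠ 0) (hwp : mdot w p = 0) (hpq : mdot p q ≠ 0) :
    mdot (w - (mdot w q / mdot p q) • p) q = 0 ∧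
    mdot (w - (mdot w q / mdot p q) • p) (w - (mdot w q / mdot p q) • p)
      = mdot w w * (1 + tance q w / tance p q) := by
  have hww : 0 < mdot w w := mdot_spacelike p w hp hw hwp
  set c : ℝ := mdot w q / mdot p q with hc
  have hcm : c * mdot p q = mdot w q := div_mul_cancel₀ _ hpq
  constructor
  · rw [mdot_sub_smul_left, hcm, sub_self]
  · have e : mdot (w - c • p) (w - c • p)
        = mdot w w - 2 * c * mdot w p + c ^ 2 * mdot p p := by
      rw [mdot_sub_smul_left, mdot_comm w (w - c • p), mdot_comm p (w - c • p),
        mdot_sub_smul_left, mdot_sub_smul_left, mdot_comm p w]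
      ring
    rw [e, hwp]
    unfold tance
    rw [mdot_comm q w, hc]
    field_simp [hww.ne', hq.ne, hp.ne]
    ring
end

section
/- If p, q are timelike vectors, w ∈ p^⊥ is nonzero with p, q, w linearly dependent (coplanar), and ⟨p,q⟩ ≠ 0, then ta(w,q) + ta(p,q) = 1; equivalently, the determinant of the Gram matrix of (p,q,w) vanishes, and consequently ⟨w',w'⟩ = ⟨w,w⟩/ta(p,q) where w' = w - (⟨w,q⟩/⟨p,q⟩)p. -/
lemma mdot_add_left {n : ℕ} (p p' q : Fin (n + 1) → ℝ) :
    mdot (p + p') q = mdot p q + mdot p' q := by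
  simp [mdot, add_mul, Finset.sum_add_distrib]; ring

lemma mdot_smul_left {n : ℕ} (c : ℝ) (p q : Fin (n + 1) → ℝ) :
    mdot (c • p) q = c * mdot p q := by
  simp only [mdot, Pi.smul_apply, smul_eq_mul, mul_assoc, ← Finset.mul_sum]
  ring

lemma mdot_zero_left {n : ℕ} (q : Fin (n + 1) → ℝ) : mdot 0 q = 0 := by
  simp [mdot]

lemma mdot_add_right {n : ℕ} (p q q' : Fin (n + 1) → ℝ) :
    mdot p (q + q') = mdot p q + mdot p q' := by
  rw [mdot_comm, mdot_add_left, mdot_comm q p, mdot_comm q' p]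

lemma mdot_smul_right {n : ℕ} (c : ℝ) (p q : Fin (n + 1) → ℝ) :
    mdot p (c • q) = c * mdot p q := by
  rw [mdot_comm, mdot_smul_left, mdot_comm q p]

lemma mdot_split {n : ℕ} (p q : Fin (n + 1) → ℝ) :
    mdot p q = (∑ i ∈ Finset.univ.erase 0, p i * q i) - p 0 * q 0 := by
  rw [mdot, ← Finset.add_sum_erase _ _ (Finset.mem_univ 0)]; ring

/-- A nonzero vector orthogonal to a timelike vector cannot be null. -/
lemma null_orth_timelike {n : ℕ} (p w : Fin (n + 1) → ℝ)
    (hp : mdot p p < 0) (hwp : mdot w p = 0) (hww : mdot w w = 0) : w = 0 := by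
  set s : Finset (Fin (n + 1)) := Finset.univ.erase 0 with hs
  have hP : ∑ i ∈ s, p i * p i < p 0 * p 0 := by
    have := mdot_split p p; linarith
  have hW : ∑ i ∈ s, w i * w i = w 0 * w 0 := by
    have := mdot_split w w; linarith
  have hWP : ∑ i ∈ s, w i * p i = w 0 * p 0 := by
    have := mdot_split w p; linarith
  have hw0 : w 0 = 0 := by
    by_contra h0
    have hcs := Finset.sum_mul_sq_le_sq_mul_sq s w p
    simp only [sq] at hcs
    rw [hWP, hW] at hcs
    have hwpos : 0 < w 0 * w 0 := mul_self_pos.mpr h0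
    nlinarith [hcs, mul_lt_mul_of_pos_left hP hwpos]
  have hWs : ∑ i ∈ s, w i * w i = 0 := by rw [hW, hw0]; ring
  funext i
  by_cases hi : i = 0
  · rw [hi, hw0]; rfl
  · have hmem : i ∈ s := Finset.mem_erase.mpr ⟨hi, Finset.mem_univ i⟩
    have h := (Finset.sum_eq_zero_iff_of_nonneg
      (fun j _ => mul_self_nonneg (w j))).mp hWs i hmem
    have : w i = 0 := by nlinarith [mul_self_nonneg (w i)]
    simpa using this

lemma mdot_lin {n : ℕ} (a b c : ℝ) (p q w x : Fin (n + 1) → ℝ)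
    (h : a • p + b • q + c • w = 0) :
    a * mdot p x + b * mdot q x + c * mdot w x = 0 := by
  have := congrArg (fun v => mdot v x) h
  simpa [mdot_add_left, mdot_smul_left, mdot_zero_left] using this

/-- in the coplanar case, `ta(w,q) + ta(p,q) = 1`; equivalently the Gram
determinant of `(p,q,w)` vanishes, and consequently `⟨w',w'⟩ = ⟨w,w⟩/ta(p,q)`. -/
theorem coplanar_tance_identity {n : ℕ} (p q w : Fin (n + 1) → ℝ)
    (hp : mdot p p < 0) (hq : mdot q q < 0)
    (hw : w ≠ 0) (hwp : mdot w p = 0) (hpq : mdot p q ≠ 0)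
    (hdep : ¬ LinearIndependent ℝ ![p, q, w]) :
    tance w q + tance p q = 1 ∧
    Matrix.det !![mdot p p, mdot p q, 0;
                  mdot q p, mdot q q, mdot q w;
                  0, mdot w q, mdot w w] = 0 ∧
    mdot (w - (mdot w q / mdot p q) • p) (w - (mdot w q / mdot p q) • p)
      = mdot w w / tance p q := by
  obtain ⟨g, hsum, i, hgi⟩ := Fintype.not_linearIndependent_iff.mp hdep
  rw [Fin.sum_univ_three] at hsum
  simp only [Matrix.cons_val_zero, Matrix.cons_val_one, Matrix.head_cons,
    Matrix.cons_val_two, Matrix.tail_cons] at hsum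
  -- the three linear equations
  have E1 := mdot_lin (g 0) (g 1) (g 2) p q w p hsum
  have E2 := mdot_lin (g 0) (g 1) (g 2) p q w q hsum
  have E3 := mdot_lin (g 0) (g 1) (g 2) p q w w hsum
  rw [mdot_comm q p, hwp, mul_zero, add_zero] at E1
  rw [mdot_comm w q] at E2
  rw [mdot_comm p w, hwp, mul_zero, zero_add, mdot_comm q w] at E3
  -- E1 : g 0 * mdot p p + g 1 * mdot p q = 0
  -- E2 : g 0 * mdot p q + g 1 * mdot q q + g 2 * mdot q w = 0
  -- E3 : g 1 * mdot w q + g 2 * mdot w w = 0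
  -- the Gram determinant vanishes
  have hdet : Matrix.det !![mdot p p, mdot p q, 0;
                  mdot q p, mdot q q, mdot q w;
                  0, mdot w q, mdot w w] = 0 := by
    apply Matrix.exists_mulVec_eq_zero_iff.mp
    refine ⟨g, fun h0 => hgi (congrFun h0 i), ?_⟩
    funext j
    fin_cases j <;>
      simp [Matrix.mulVec, dotProduct, Fin.sum_univ_three] <;>
      [ linear_combination E1;
        linear_combination E2 + g 0 * mdot_comm q p;
        linear_combination E3 ]
  have hD : mdot p p * mdot q q * mdot w w
      = mdot p p * mdot q w ^ 2 + mdot p q ^ 2 * mdot w w := by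
    have h := hdet
    rw [Matrix.det_fin_three] at h
    simp [Matrix.cons_val_zero, Matrix.cons_val_one, Matrix.head_cons,
      Matrix.cons_val_two, Matrix.tail_cons] at h
    rw [mdot_comm q p, mdot_comm w q] at h
    nlinarith [h]
  have hpp : mdot p p ≠ 0 := ne_of_lt hp
  have hqq : mdot q q ≠ 0 := ne_of_lt hq
  have hww : mdot w w ≠ 0 := by
    intro h0
    exact hw (null_orth_timelike p w hp hwp h0)
  refine ⟨?_, hdet, ?_⟩
  · rw [tance, tance, mdot_comm w q]
    field_simp
    nlinarith [hD]
  · have hsub : w - (mdot w q / mdot p q) • p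
        = w + (-(mdot w q / mdot p q)) • p := by
      funext j; simp [sub_eq_add_neg]
    have hexp : mdot (w - (mdot w q / mdot p q) • p) (w - (mdot w q / mdot p q) • p)
        = mdot w w - 2 * (mdot w q / mdot p q) * mdot w p
          + (mdot w q / mdot p q) ^ 2 * mdot p p := by
      rw [hsub, mdot_add_left, mdot_add_right, mdot_add_right, mdot_smul_left,
        mdot_smul_left, mdot_smul_right, mdot_smul_right, mdot_comm p w]
      ring
    rw [hexp, hwp, tance]
    have hqw : mdot w q = mdot q w := mdot_comm w q
    rw [hqw]
    field_simp
    nlinarith [hD]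
end
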